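/- (Minimum value bound under oversmoothing) Let $t\in(1,2)$, and suppose the two-sided Lipschitz condition with constant $L$ holds on a shrinkage-closed domain $D$. Let $x^+\in D$ with $\|x^+\|_{k_t}\le\varrho$ and $\|g^{obs}-F(x^+)\|_Y\le\delta$. Then every minimizer $\hat x_\alpha$ of the Tikhonov functional satisfies $\tfrac12\|g^{obs}-F(\hat x_\alpha)\|_Y^2+\alpha\|\hat x_\alpha\|_{\bar r,1}\le\delta^2+C_t\varrho^t\alpha^{2-t}$ for all $\alpha>0$, with $C_t$ depending only on $t$ and $L$. -/

import Mathlib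

open scoped ENNReal
noncomputable section

variable {Λ : Type*}

/-- Weighted `ℓ^p` quasi-norm (value in `ℝ≥0∞`). -/
def wnorm (ω : Λ → ℝ) (p : ℝ) (x : Λ → ℝ) : ℝ≥0∞ :=
  (∑' j, ENNReal.ofReal (ω j ^ p * |x j| ^ p)) ^ (1 / p)

/-- The interpolating weights `(ω_t)_j = (a_j^{2t-2} r_j^{2-t})^{1/t}`. -/
def omegaWeight (a r : Λ → ℝ) (t : ℝ) : Λ → ℝ :=
  fun j => (a j ^ (2 * t - 2) * r j ^ (2 - t)) ^ (1 / t)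

/-- Weighted `ℓ¹` norm `‖x‖_{r,1} = ∑ r_j |x_j|`. -/
def rnorm1 (r : Λ → ℝ) (x : Λ → ℝ) : ℝ≥0∞ := ∑' j, ENNReal.ofReal (r j * |x j|)

/-- Weighted `ℓ²` norm `‖x‖_{a,2} = (∑ a_j² x_j²)^{1/2}`. -/
def anorm2 (a : Λ → ℝ) (x : Λ → ℝ) : ℝ≥0∞ :=
  (∑' j, ENNReal.ofReal (a j ^ 2 * x j ^ 2)) ^ ((1 : ℝ) / 2)

/-- The sum `∑_j a_j⁻² r_j² 𝟙_{a_j⁻² r_j α < |x_j|}`. -/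
def kSum (a r : Λ → ℝ) (α : ℝ) (x : Λ → ℝ) : ℝ≥0∞ :=
  ∑' j, ENNReal.ofReal (if r j * α / a j ^ 2 < |x j| then r j ^ 2 / a j ^ 2 else 0)

/-- The weak quasi-norm `‖x‖_{k_t} = sup_{α>0} α (kSum α x)^{1/t}`. -/
def knorm (a r : Λ → ℝ) (t : ℝ) (x : Λ → ℝ) : ℝ≥0∞ :=
  ⨆ α ∈ Set.Ioi (0 : ℝ), ENNReal.ofReal α * (kSum a r α x) ^ (1 / t)

/-- Hard thresholding operator. -/
def Tthresh (a r : Λ → ℝ) (α : ℝ) (x : Λ → ℝ) : Λ → ℝ :=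
  fun j => if r j * α / a j ^ 2 < |x j| then x j else 0

/-- geometric sum of ofReal -/
lemma geom_ofReal (c q : ℝ) (hc : 0 ≤ c) (hq0 : 0 ≤ q) (hq1 : q < 1) :
    (∑' k : ℕ, ENNReal.ofReal (c * q ^ k)) = ENNReal.ofReal (c * (1 - q)⁻¹) := by
  rw [← ENNReal.ofReal_tsum_of_nonneg (fun k => by positivity)
    (by simpa using (summable_geometric_of_lt_one hq0 hq1).mul_left c),
    tsum_mul_left, tsum_geometric_of_lt_one hq0 hq1]

lemma dyadic_down {β s : ℝ} (hβ : 0 < β) (h0 : 0 < s) (hsβ : s ≤ β) :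
    ∃ k : ℕ, β / 2 ^ (k + 1) < s ∧ s ≤ β / 2 ^ k := by
  obtain ⟨k, h1, h2⟩ := exists_nat_pow_near ((one_le_div h0).mpr hsβ) (one_lt_two (α := ℝ))
  exact ⟨k, by rw [div_lt_iff₀ (by positivity)] at *; nlinarith [pow_pos (zero_lt_two (α := ℝ)) (k+1)],
    by rw [le_div_iff₀ (by positivity)]; rw [le_div_iff₀ h0] at h1; linarith⟩

lemma dyadic_up {β s : ℝ} (hβ : 0 < β) (hs : β < s) :
    ∃ k : ℕ, β * 2 ^ k ≤ s ∧ s < β * 2 ^ (k + 1) := by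
  obtain ⟨k, h1, h2⟩ := exists_nat_pow_near ((one_le_div hβ).mpr hs.le) (one_lt_two (α := ℝ))
  refine ⟨k, ?_, ?_⟩
  · rw [le_div_iff₀ hβ] at h1; linarith
  · rw [div_lt_iff₀ hβ] at h2; linarith

lemma pow_base_rpow (x : ℝ) (hx : 0 ≤ x) (n : ℕ) (y : ℝ) : ((x ^ n : ℝ)) ^ y = (x ^ y) ^ n := by
  rw [← Real.rpow_natCast x n, ← Real.rpow_natCast (x ^ y) n, ← Real.rpow_mul hx,
    ← Real.rpow_mul hx, mul_comm]

lemma eqA (t ρ β : ℝ) (hρ : 0 < ρ) (hβ : 0 < β) (k : ℕ) :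
    (ρ / (β / 2 ^ (k + 1))) ^ t * (β / 2 ^ k) ^ 2
      = (2 ^ t * ρ ^ t * β ^ (2 - t)) * ((2 : ℝ) ^ (t - 2)) ^ k := by
  have h2 : (0:ℝ) < 2 ^ (k+1) := by positivity
  have h3 : (0:ℝ) < β / 2 ^ (k+1) := by positivity
  rw [Real.div_rpow hρ.le h3.le, Real.div_rpow hβ.le (by positivity : (0:ℝ) ≤ 2 ^ (k+1)),
    pow_base_rpow 2 (by norm_num) (k+1) t,
    Real.rpow_sub hβ, Real.rpow_two, Real.rpow_sub two_pos, Real.rpow_two,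
    pow_succ, div_pow, div_pow]
  have hbt : (0:ℝ) < β ^ t := Real.rpow_pos_of_pos hβ t
  have h2t : (0:ℝ) < 2 ^ t := Real.rpow_pos_of_pos two_pos t
  have h2tk : (0:ℝ) < (2:ℝ) ^ t ^ k := by positivity
  field_simp
  rw [pow_right_comm]

lemma eqB (t ρ β : ℝ) (hρ : 0 < ρ) (hβ : 0 < β) (k : ℕ) :
    (ρ / (β * 2 ^ k / 2)) ^ t * (β * 2 ^ (k + 1))
      = (2 ^ (t + 1) * ρ ^ t * β ^ (1 - t)) * ((2 : ℝ) ^ (1 - t)) ^ k := by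
  have h3 : (0:ℝ) < β * 2 ^ k / 2 := by positivity
  rw [Real.div_rpow hρ.le h3.le, Real.div_rpow (by positivity) (by norm_num : (0:ℝ) ≤ 2),
    Real.mul_rpow hβ.le (by positivity : (0:ℝ) ≤ (2:ℝ)^k),
    pow_base_rpow 2 (by norm_num) k t,
    Real.rpow_sub hβ, Real.rpow_one, Real.rpow_sub two_pos, Real.rpow_one,
    Real.rpow_add two_pos, Real.rpow_one, pow_succ, div_pow]
  have hbt : (0:ℝ) < β ^ t := Real.rpow_pos_of_pos hβ t
  have h2t : (0:ℝ) < 2 ^ t := Real.rpow_pos_of_pos two_pos t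
  have h2tk : (0:ℝ) < (2:ℝ) ^ t ^ k := by positivity
  field_simp

lemma sumA {ι : Type*} (w : ι → ℝ≥0∞) (s : ι → ℝ) (t ρ β : ℝ)
    (ht2 : t < 2) (hρ : 0 < ρ) (hβ : 0 < β) (hs : ∀ j, 0 ≤ s j)
    (hK : ∀ u, 0 < u → (∑' j, if u < s j then w j else 0) ≤ ENNReal.ofReal ((ρ / u) ^ t)) :
    (∑' j, if s j ≤ β then w j * ENNReal.ofReal (s j ^ 2) else 0)
      ≤ ENNReal.ofReal ((2 ^ t * ρ ^ t * β ^ (2 - t)) * (1 - 2 ^ (t - 2))⁻¹) := by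
  set q : ℝ := 2 ^ (t - 2) with hq
  have hq0 : 0 ≤ q := (Real.rpow_pos_of_pos two_pos _).le
  have hq1 : q < 1 := Real.rpow_lt_one_of_one_lt_of_neg one_lt_two (by linarith)
  set g : ℕ → ι → ℝ≥0∞ := fun k j =>
    (if β / 2 ^ (k + 1) < s j ∧ s j ≤ β / 2 ^ k then w j else 0)
      * ENNReal.ofReal ((β / 2 ^ k) ^ 2) with hg
  calc (∑' j, if s j ≤ β then w j * ENNReal.ofReal (s j ^ 2) else 0)
      ≤ ∑' j, ∑' k, g k j := by
        refine ENNReal.tsum_le_tsum fun j => ?_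
        by_cases hjβ : s j ≤ β
        · rw [if_pos hjβ]
          rcases eq_or_lt_of_le (hs j) with h0 | h0
          · simp [← h0]
          · obtain ⟨k, hk1, hk2⟩ := dyadic_down hβ h0 hjβ
            refine le_trans ?_ (ENNReal.le_tsum k)
            rw [hg]; dsimp only
            rw [if_pos ⟨hk1, hk2⟩]
            exact mul_le_mul_right (ENNReal.ofReal_le_ofReal (by nlinarith)) (w j)
        · rw [if_neg hjβ]; exact zero_le
    _ = ∑' k, ∑' j, g k j := ENNReal.tsum_comm
    _ ≤ ∑' k : ℕ, ENNReal.ofReal ((2 ^ t * ρ ^ t * β ^ (2 - t)) * q ^ k) := by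
        refine ENNReal.tsum_le_tsum fun k => ?_
        have hc : (0:ℝ) < β / 2 ^ (k + 1) := by positivity
        calc (∑' j, g k j)
            = (∑' j, if β / 2 ^ (k + 1) < s j ∧ s j ≤ β / 2 ^ k then w j else 0)
                * ENNReal.ofReal ((β / 2 ^ k) ^ 2) := ENNReal.tsum_mul_right
          _ ≤ (∑' j, if β / 2 ^ (k + 1) < s j then w j else 0)
                * ENNReal.ofReal ((β / 2 ^ k) ^ 2) := by
              refine mul_le_mul_left (ENNReal.tsum_le_tsum fun j => ?_) _
              by_cases h : β / 2 ^ (k + 1) < s j ∧ s j ≤ β / 2 ^ k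
              · rw [if_pos h, if_pos h.1]
              · rw [if_neg h]; exact zero_le
          _ ≤ ENNReal.ofReal ((ρ / (β / 2 ^ (k + 1))) ^ t) * ENNReal.ofReal ((β / 2 ^ k) ^ 2) :=
              mul_le_mul_left (hK _ hc) _
          _ = ENNReal.ofReal ((ρ / (β / 2 ^ (k + 1))) ^ t * (β / 2 ^ k) ^ 2) :=
              (ENNReal.ofReal_mul (by positivity)).symm
          _ = ENNReal.ofReal ((2 ^ t * ρ ^ t * β ^ (2 - t)) * q ^ k) := by
              rw [eqA t ρ β hρ hβ k]
    _ = ENNReal.ofReal ((2 ^ t * ρ ^ t * β ^ (2 - t)) * (1 - q)⁻¹) :=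
        geom_ofReal _ _ (by positivity) hq0 hq1

lemma sumB {ι : Type*} (w : ι → ℝ≥0∞) (s : ι → ℝ) (t ρ β : ℝ)
    (ht1 : 1 < t) (hρ : 0 < ρ) (hβ : 0 < β)
    (hK : ∀ u, 0 < u → (∑' j, if u < s j then w j else 0) ≤ ENNReal.ofReal ((ρ / u) ^ t)) :
    (∑' j, if β < s j then w j * ENNReal.ofReal (s j) else 0)
      ≤ ENNReal.ofReal ((2 ^ (t + 1) * ρ ^ t * β ^ (1 - t)) * (1 - 2 ^ (1 - t))⁻¹) := by
  set q : ℝ := 2 ^ (1 - t) with hq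
  have hq0 : 0 ≤ q := (Real.rpow_pos_of_pos two_pos _).le
  have hq1 : q < 1 := Real.rpow_lt_one_of_one_lt_of_neg one_lt_two (by linarith)
  set g : ℕ → ι → ℝ≥0∞ := fun k j =>
    (if β * 2 ^ k / 2 < s j then w j else 0) * ENNReal.ofReal (β * 2 ^ (k + 1)) with hg
  calc (∑' j, if β < s j then w j * ENNReal.ofReal (s j) else 0)
      ≤ ∑' j, ∑' k, g k j := by
        refine ENNReal.tsum_le_tsum fun j => ?_
        by_cases hjβ : β < s j
        · rw [if_pos hjβ]
          obtain ⟨k, hk1, hk2⟩ := dyadic_up hβ hjβ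
          refine le_trans ?_ (ENNReal.le_tsum k)
          rw [hg]; dsimp only
          rw [if_pos (by nlinarith [pow_pos (zero_lt_two (α := ℝ)) k])]
          exact mul_le_mul_right (ENNReal.ofReal_le_ofReal hk2.le) (w j)
        · rw [if_neg hjβ]; exact zero_le
    _ = ∑' k, ∑' j, g k j := ENNReal.tsum_comm
    _ ≤ ∑' k : ℕ, ENNReal.ofReal ((2 ^ (t + 1) * ρ ^ t * β ^ (1 - t)) * q ^ k) := by
        refine ENNReal.tsum_le_tsum fun k => ?_
        have hc : (0:ℝ) < β * 2 ^ k / 2 := by positivity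
        calc (∑' j, g k j)
            = (∑' j, if β * 2 ^ k / 2 < s j then w j else 0)
                * ENNReal.ofReal (β * 2 ^ (k + 1)) := ENNReal.tsum_mul_right
          _ ≤ ENNReal.ofReal ((ρ / (β * 2 ^ k / 2)) ^ t) * ENNReal.ofReal (β * 2 ^ (k + 1)) :=
              mul_le_mul_left (hK _ hc) _
          _ = ENNReal.ofReal ((ρ / (β * 2 ^ k / 2)) ^ t * (β * 2 ^ (k + 1))) :=
              (ENNReal.ofReal_mul (by positivity)).symm
          _ = ENNReal.ofReal ((2 ^ (t + 1) * ρ ^ t * β ^ (1 - t)) * q ^ k) := by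
              rw [eqB t ρ β hρ hβ k]
    _ = ENNReal.ofReal ((2 ^ (t + 1) * ρ ^ t * β ^ (1 - t)) * (1 - q)⁻¹) :=
        geom_ofReal _ _ (by positivity) hq0 hq1

theorem stmt17 {Y : Type*} [NormedAddCommGroup Y]
    (t L : ℝ) (ht : t ∈ Set.Ioo (1:ℝ) 2) (hL : 0 < L) :
    ∃ Ct > (0:ℝ), ∀ (a r : Λ → ℝ), (∀ j, 0 < a j) → (∀ j, 0 < r j) →
      ∀ (D : Set (Λ → ℝ)) (F : (Λ → ℝ) → Y),
      (∀ x₁ ∈ D, ∀ x₂ ∈ D, anorm2 a (x₁ - x₂) ≤ ENNReal.ofReal (L * ‖F x₁ - F x₂‖)) →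
      (∀ x₁ ∈ D, ∀ x₂ ∈ D,
        ENNReal.ofReal ‖F x₁ - F x₂‖ ≤ ENNReal.ofReal L * anorm2 a (x₁ - x₂)) →
      (∀ x ∈ D, ∀ z : Λ → ℝ, (∀ j, |z j| ≤ |x j|) → z ∈ D) →
      ∀ ρ > (0:ℝ), ∀ xplus ∈ D, knorm a r t xplus ≤ ENNReal.ofReal ρ →
      ∀ δ ≥ (0:ℝ), ∀ gobs : Y, ‖gobs - F xplus‖ ≤ δ →
      ∀ α > (0:ℝ), ∀ xh ∈ D,
        (∀ z ∈ D, ENNReal.ofReal ((1 / 2) * ‖gobs - F xh‖ ^ 2) +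
            ENNReal.ofReal α * rnorm1 r xh ≤
          ENNReal.ofReal ((1 / 2) * ‖gobs - F z‖ ^ 2) + ENNReal.ofReal α * rnorm1 r z) →
        ENNReal.ofReal ((1 / 2) * ‖gobs - F xh‖ ^ 2) + ENNReal.ofReal α * rnorm1 r xh ≤
          ENNReal.ofReal (δ ^ 2 + Ct * ρ ^ t * α ^ (2 - t)) := by
  obtain ⟨ht1, ht2⟩ := ht
  have ht0 : (0:ℝ) < t := by linarith
  have hqA : (0:ℝ) < 1 - 2 ^ (t - 2) := by
    have := Real.rpow_lt_one_of_one_lt_of_neg (one_lt_two (α := ℝ)) (by linarith : t - 2 < 0)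
    linarith
  have hqB : (0:ℝ) < 1 - 2 ^ (1 - t) := by
    have := Real.rpow_lt_one_of_one_lt_of_neg (one_lt_two (α := ℝ)) (by linarith : 1 - t < 0)
    linarith
  have h2t : (0:ℝ) < 2 ^ t := Real.rpow_pos_of_pos two_pos t
  have h2t1 : (0:ℝ) < 2 ^ (t + 1) := Real.rpow_pos_of_pos two_pos _
  set CA : ℝ := 2 ^ t * (1 - 2 ^ (t - 2))⁻¹ with hCA
  set CB : ℝ := 2 ^ (t + 1) * (1 - 2 ^ (1 - t))⁻¹ with hCB
  have hCApos : 0 < CA := mul_pos h2t (inv_pos.mpr hqA)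
  have hCBpos : 0 < CB := mul_pos h2t1 (inv_pos.mpr hqB)
  refine ⟨L ^ 2 * CA + CB, add_pos (mul_pos (pow_pos hL 2) hCApos) hCBpos, ?_⟩
  intro a r ha hr D F hlow hupp hshrink ρ hρ xplus hxD hknorm δ hδ gobs hgobs α hα xh hxhD hmin
  set s : Λ → ℝ := fun j => a j ^ 2 * |xplus j| / r j with hsdef
  have hs : ∀ j, 0 ≤ s j := fun j => div_nonneg (by positivity) (hr j).le
  set w : Λ → ℝ≥0∞ := fun j => ENNReal.ofReal (r j ^ 2 / a j ^ 2) with hwdef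
  have hcond : ∀ (u : ℝ) (j : Λ), (r j * u / a j ^ 2 < |xplus j|) ↔ u < s j := by
    intro u j
    rw [hsdef, div_lt_iff₀ (pow_pos (ha j) 2), lt_div_iff₀ (hr j)]
    constructor <;> intro h <;> nlinarith
  -- the kSum bound
  have hK : ∀ u, 0 < u → (∑' j, if u < s j then w j else 0) ≤ ENNReal.ofReal ((ρ / u) ^ t) := by
    intro u hu
    have hEq : (∑' j, if u < s j then w j else 0) = kSum a r u xplus := by
      unfold kSum
      refine tsum_congr fun j => ?_
      simp only [apply_ite ENNReal.ofReal, ENNReal.ofReal_zero, hcond u j]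
      rfl
    rw [hEq]
    have h2 : ENNReal.ofReal u * (kSum a r u xplus) ^ (1 / t) ≤ ENNReal.ofReal ρ := by
      refine le_trans ?_ hknorm
      rw [knorm]
      exact le_iSup₂ (f := fun (β : ℝ) (_ : β ∈ Set.Ioi (0:ℝ)) =>
        ENNReal.ofReal β * (kSum a r β xplus) ^ (1 / t)) u hu
    have h3 : (kSum a r u xplus) ^ (1 / t) ≤ ENNReal.ofReal ρ / ENNReal.ofReal u := by
      rw [ENNReal.le_div_iff_mul_le (Or.inl (by simp [hu])) (Or.inl ENNReal.ofReal_ne_top)]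
      rw [mul_comm]; exact h2
    have h4 : kSum a r u xplus = ((kSum a r u xplus) ^ (1 / t)) ^ t := by
      rw [← ENNReal.rpow_mul, one_div, inv_mul_cancel₀ (ne_of_gt ht0), ENNReal.rpow_one]
    calc kSum a r u xplus = ((kSum a r u xplus) ^ (1 / t)) ^ t := h4
      _ ≤ (ENNReal.ofReal ρ / ENNReal.ofReal u) ^ t := ENNReal.rpow_le_rpow h3 ht0.le
      _ = ENNReal.ofReal ((ρ / u) ^ t) := by
          rw [← ENNReal.ofReal_div_of_pos hu, ENNReal.ofReal_rpow_of_pos (div_pos hρ hu)]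
  set z : Λ → ℝ := Tthresh a r α xplus with hzdef
  have hzD : z ∈ D := by
    refine hshrink xplus hxD z fun j => ?_
    rw [hzdef, Tthresh]
    split_ifs
    · exact le_rfl
    · simp [abs_nonneg]
  -- A bound
  set A : ℝ := Real.sqrt (CA * ρ ^ t * α ^ (2 - t)) with hAdef
  have hApos : 0 < CA * ρ ^ t * α ^ (2 - t) := by
    have := Real.rpow_pos_of_pos hρ t
    have := Real.rpow_pos_of_pos hα (2 - t)
    positivity
  have hA0 : 0 < A := Real.sqrt_pos.mpr hApos
  have hA2 : A ^ 2 = CA * ρ ^ t * α ^ (2 - t) := Real.sq_sqrt hApos.le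
  have hSA : (∑' j, ENNReal.ofReal (a j ^ 2 * ((xplus - z) j) ^ 2))
      ≤ ENNReal.ofReal (A ^ 2) := by
    have hrw : ∀ j, ENNReal.ofReal (a j ^ 2 * ((xplus - z) j) ^ 2)
        = (if s j ≤ α then w j * ENNReal.ofReal (s j ^ 2) else 0) := by
      intro j
      have hzj : (xplus - z) j = if α < s j then 0 else xplus j := by
        rw [Pi.sub_apply, hzdef, Tthresh]
        simp only [hcond α j]
        split_ifs <;> ring
      by_cases h : α < s j
      · rw [hzj, if_pos h, if_neg (not_le.mpr h)]
        simp
      · rw [hzj, if_neg h, if_pos (not_lt.mp h), hwdef]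
        dsimp only
        rw [← ENNReal.ofReal_mul (by positivity)]
        congr 1
        rw [hsdef]
        dsimp only
        have ha' : a j ≠ 0 := (ha j).ne'
        have hr' : r j ≠ 0 := (hr j).ne'
        rw [div_pow, mul_pow, sq_abs]
        field_simp
    calc (∑' j, ENNReal.ofReal (a j ^ 2 * ((xplus - z) j) ^ 2))
        = ∑' j, (if s j ≤ α then w j * ENNReal.ofReal (s j ^ 2) else 0) := tsum_congr hrw
      _ ≤ ENNReal.ofReal ((2 ^ t * ρ ^ t * α ^ (2 - t)) * (1 - 2 ^ (t - 2))⁻¹) :=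
          sumA w s t ρ α ht2 hρ hα hs hK
      _ = ENNReal.ofReal (A ^ 2) := by rw [hA2, hCA]; ring_nf
  have hanorm : anorm2 a (xplus - z) ≤ ENNReal.ofReal A := by
    rw [anorm2]
    calc (∑' j, ENNReal.ofReal (a j ^ 2 * ((xplus - z) j) ^ 2)) ^ ((1:ℝ)/2)
        ≤ ENNReal.ofReal (A ^ 2) ^ ((1:ℝ)/2) := ENNReal.rpow_le_rpow hSA (by norm_num)
      _ = ENNReal.ofReal A := by
          rw [ENNReal.ofReal_rpow_of_pos (by positivity)]
          congr 1
          rw [← Real.rpow_natCast A 2, ← Real.rpow_mul hA0.le]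
          norm_num
  have hFdist : ‖F xplus - F z‖ ≤ L * A := by
    have h1 := hupp xplus hxD z hzD
    have h2 : ENNReal.ofReal ‖F xplus - F z‖ ≤ ENNReal.ofReal (L * A) := by
      refine le_trans h1 ?_
      rw [ENNReal.ofReal_mul hL.le]
      exact mul_le_mul_right hanorm _
    exact (ENNReal.ofReal_le_ofReal_iff (by positivity)).mp h2
  -- B bound
  have hB : rnorm1 r z ≤ ENNReal.ofReal (CB * ρ ^ t * α ^ (1 - t)) := by
    have hrw : ∀ j, ENNReal.ofReal (r j * |z j|)
        = (if α < s j then w j * ENNReal.ofReal (s j) else 0) := by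
      intro j
      rw [hzdef, Tthresh]
      simp only [hcond α j]
      by_cases h : α < s j
      · rw [if_pos h, if_pos h, hwdef]
        dsimp only
        rw [← ENNReal.ofReal_mul (by positivity)]
        congr 1
        rw [hsdef]
        dsimp only
        have ha' : a j ≠ 0 := (ha j).ne'
        have hr' : r j ≠ 0 := (hr j).ne'
        field_simp
      · rw [if_neg h, if_neg h]
        simp
    calc rnorm1 r z = ∑' j, (if α < s j then w j * ENNReal.ofReal (s j) else 0) :=
          tsum_congr hrw
      _ ≤ ENNReal.ofReal ((2 ^ (t + 1) * ρ ^ t * α ^ (1 - t)) * (1 - 2 ^ (1 - t))⁻¹) :=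
          sumB w s t ρ α ht1 hρ hα hK
      _ = ENNReal.ofReal (CB * ρ ^ t * α ^ (1 - t)) := by rw [hCB]; ring_nf
  -- assemble
  have hnormz : ‖gobs - F z‖ ≤ δ + L * A := by
    have : gobs - F z = (gobs - F xplus) + (F xplus - F z) := by abel
    rw [this]
    exact le_trans (norm_add_le _ _) (add_le_add hgobs hFdist)
  have hhalf : (1 / 2) * ‖gobs - F z‖ ^ 2 ≤ δ ^ 2 + L ^ 2 * A ^ 2 := by
    have h0 : (0:ℝ) ≤ ‖gobs - F z‖ := norm_nonneg _
    nlinarith [sq_nonneg (δ - L * A), sq_nonneg (δ + L * A)]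
  have hαB : α * (CB * ρ ^ t * α ^ (1 - t)) = CB * ρ ^ t * α ^ (2 - t) := by
    have : α * α ^ (1 - t) = α ^ (2 - t) := by
      nth_rewrite 1 [← Real.rpow_one α]
      rw [← Real.rpow_add hα]
      congr 1
      ring
    calc α * (CB * ρ ^ t * α ^ (1 - t)) = CB * ρ ^ t * (α * α ^ (1 - t)) := by ring
      _ = CB * ρ ^ t * α ^ (2 - t) := by rw [this]
  calc ENNReal.ofReal ((1 / 2) * ‖gobs - F xh‖ ^ 2) + ENNReal.ofReal α * rnorm1 r xh
      ≤ ENNReal.ofReal ((1 / 2) * ‖gobs - F z‖ ^ 2) + ENNReal.ofReal α * rnorm1 r z :=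
        hmin z hzD
    _ ≤ ENNReal.ofReal (δ ^ 2 + L ^ 2 * A ^ 2)
        + ENNReal.ofReal α * ENNReal.ofReal (CB * ρ ^ t * α ^ (1 - t)) :=
        add_le_add (ENNReal.ofReal_le_ofReal hhalf) (mul_le_mul_right hB _)
    _ = ENNReal.ofReal (δ ^ 2 + L ^ 2 * A ^ 2 + CB * ρ ^ t * α ^ (2 - t)) := by
        rw [← ENNReal.ofReal_mul hα.le, hαB, ← ENNReal.ofReal_add (by positivity)]
        have h1 : (0:ℝ) < ρ ^ t := Real.rpow_pos_of_pos hρ t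
        have h2 : (0:ℝ) < α ^ (2 - t) := Real.rpow_pos_of_pos hα _
        positivity
    _ = ENNReal.ofReal (δ ^ 2 + (L ^ 2 * CA + CB) * ρ ^ t * α ^ (2 - t)) := by
        rw [hA2]; ring_nf
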